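/- arXiv:2211.01410 — 2 statements merged into one kernel-verified Lean document; each statement's English description precedes it below -/
import Mathlib

section
/- Let n be a positive integer with Tribonacci representation set S. If n is a positive record, i.e., out(n) − α·n > out(m) − α·m for every integer m with 1 ≤ m < n, then every index j ∈ S satisfies T(j+1) − α·T(j) > 0. -/
/-- The Tribonacci sequence: T(0)=0, T(1)=0, T(2)=1,
    T(n+3) = T(n+2) + T(n+1) + T(n). -/
def trib : ℕ → ℕ
  | 0 => 0
  | 1 => 0
  | 2 => 1
  | n + 3 => trib (n + 2) + trib (n + 1) + trib n

/-- A Tribonacci representation set: a finite set of naturals, all at least 3,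
    containing no three consecutive integers. -/
def IsTribRep (S : Finset ℕ) : Prop :=
  (∀ i ∈ S, 3 ≤ i) ∧ ∀ i : ℕ, ¬(i ∈ S ∧ i + 1 ∈ S ∧ i + 2 ∈ S)

lemma trib_pos : ∀ k : ℕ, 0 < trib (k + 2)
  | 0 => by simp [trib]
  | (k+1) => by
      have := trib_pos k
      show 0 < trib (k + 3)
      rw [trib]; omega

lemma trib_two_le (k : ℕ) : 2 ≤ trib (k + 4) := by
  have h1 : 0 < trib (k + 1 + 2) := trib_pos (k + 1)
  have h2 : 0 < trib (k + 1 + 1) := trib_pos k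
  show 2 ≤ trib (k + 1 + 3)
  rw [trib]; omega

/-- If `n` is a positive record for `out(n) − α·n`, then every index `j` in the
    Tribonacci representation of `n` satisfies `T(j+1) − α·T(j) > 0`. -/
theorem positive_record_indices (α : ℝ) (hα : α ^ 3 = α ^ 2 + α + 1)
    (n : ℕ) (hn : 0 < n) (S : Finset ℕ) (hS : IsTribRep S)
    (hsum : n = ∑ i ∈ S, trib i)
    (hrec : ∀ m : ℕ, 1 ≤ m → m < n →
      ∀ Sm : Finset ℕ, IsTribRep Sm → m = ∑ i ∈ Sm, trib i →
        (↑(∑ i ∈ Sm, trib (i + 1)) : ℝ) - α * m <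
          (↑(∑ i ∈ S, trib (i + 1)) : ℝ) - α * n) :
    ∀ j ∈ S, 0 < (trib (j + 1) : ℝ) - α * trib j := by
  intro j hj
  have h3 : 3 ≤ j := hS.1 j hj
  have hα2 : α < 2 := by
    by_contra h
    push_neg at h
    nlinarith [sq_nonneg α, sq_nonneg (α - 2), sq_nonneg (α - 1)]
  set m := ∑ i ∈ S.erase j, trib i with hm_def
  have hsplit : trib j + m = n := by
    rw [hsum]; exact Finset.add_sum_erase S trib hj
  have hout : trib (j + 1) + ∑ i ∈ S.erase j, trib (i + 1)
      = ∑ i ∈ S, trib (i + 1) :=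
    Finset.add_sum_erase S (fun i => trib (i + 1)) hj
  have htj : 0 < trib j := by
    obtain ⟨k, rfl⟩ : ∃ k, j = k + 2 := ⟨j - 2, by omega⟩
    exact trib_pos k
  by_cases hm : 1 ≤ m
  · have rep : IsTribRep (S.erase j) := by
      constructor
      · exact fun i hi => hS.1 i (Finset.mem_of_mem_erase hi)
      · intro i ⟨a, b, c⟩
        exact hS.2 i ⟨Finset.mem_of_mem_erase a, Finset.mem_of_mem_erase b,
          Finset.mem_of_mem_erase c⟩
    have hlt := hrec m hm (by omega) (S.erase j) rep rfl
    have hn' : (n : ℝ) = trib j + m := by exact_mod_cast hsplit.symm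
    have ho' : (↑(∑ i ∈ S, trib (i + 1)) : ℝ)
        = trib (j + 1) + ↑(∑ i ∈ S.erase j, trib (i + 1)) := by
      exact_mod_cast hout.symm
    rw [hn', ho'] at hlt
    linarith
  · have hm0 : m = 0 := by omega
    have hnj : n = trib j := by omega
    by_cases hn1 : n = 1
    · have hj1 : trib j = 1 := by omega
      obtain ⟨k, rfl⟩ : ∃ k, j = k + 3 := ⟨j - 3, by omega⟩
      have h2 : 2 ≤ trib (k + 3 + 1) := trib_two_le k
      have h2' : (2 : ℝ) ≤ trib (k + 3 + 1) := by exact_mod_cast h2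
      rw [hj1]
      push_cast
      linarith
    · have hempty : S.erase j = ∅ := by
        by_contra he
        obtain ⟨i, hi⟩ := Finset.nonempty_iff_ne_empty.mpr he
        have h3i := hS.1 i (Finset.mem_of_mem_erase hi)
        have hti : 0 < trib i := by
          obtain ⟨k, rfl⟩ : ∃ k, i = k + 2 := ⟨i - 2, by omega⟩
          exact trib_pos k
        have : trib i ≤ m :=
          Finset.single_le_sum (fun a _ => Nat.zero_le (trib a)) hi
        omega
      have hSj : S = {j} := by
        rw [← Finset.insert_erase hj, hempty]; rfl
      have houtj : ∑ i ∈ S, trib (i + 1) = trib (j + 1) := by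
        rw [hSj, Finset.sum_singleton]
      have h1n : 1 < n := by omega
      have rep3 : IsTribRep ({3} : Finset ℕ) := by
        constructor
        · intro i hi; simp at hi; omega
        · intro i ⟨a, b, _⟩; simp at a b; omega
      have hs3 : (1 : ℕ) = ∑ i ∈ ({3} : Finset ℕ), trib i := by decide
      have hlt := hrec 1 le_rfl h1n {3} rep3 hs3
      rw [Finset.sum_singleton] at hlt
      have ht4 : trib (3 + 1) = 2 := by decide
      rw [ht4, houtj, hnj] at hlt
      push_cast at hlt ⊢
      linarith
end

section
/- Let S be a Tribonacci representation set with 3 ∈ S and let g = ∑_{i∈S} T(i). Then the number of positive integers m ≤ g whose Tribonacci representation set contains 3 equals g − ∑_{i∈S, i≥4} T(i−1). -/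
lemma trib_add3 (n : ℕ) : trib (n+3) = trib (n+2) + trib (n+1) + trib n := rfl

lemma trib_mono : Monotone trib := by
  apply monotone_nat_of_le_succ
  intro n
  match n with
  | 0 => simp [trib]
  | 1 => simp [trib]
  | n+2 => rw [show n+2+1 = n+3 from rfl, trib_add3]; omega

lemma trib_pos_s8 {n : ℕ} (h : 2 ≤ n) : 0 < trib n :=
  lt_of_lt_of_le (by norm_num [trib]) (trib_mono h)

lemma trib_rec {n : ℕ} (h : 2 ≤ n) : trib (n+1) = trib n + trib (n-1) + trib (n-2) := by
  obtain ⟨m, rfl⟩ : ∃ m, n = m + 2 := ⟨n - 2, by omega⟩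
  simp [trib_add3]

lemma trib_strict {n : ℕ} (h : 3 ≤ n) : trib n < trib (n+1) := by
  rw [trib_rec (by omega)]
  have := trib_pos_s8 (n := n - 1) (by omega)
  omega

lemma trib_lt_trib {i j : ℕ} (hi : 3 ≤ i) (hij : i < j) : trib i < trib j :=
  lt_of_lt_of_le (trib_strict hi) (trib_mono hij)

lemma le_trib_add_two (n : ℕ) : n ≤ trib (n + 2) := by
  induction n using Nat.strong_induction_on with
  | _ n ih =>
    match n with
    | 0 => simp [trib]
    | 1 => simp [trib]
    | n+2 =>
      rw [show n+2+2 = (n+1)+3 from rfl, trib_add3]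
      have h1 := ih (n+1) (by omega)
      have h2 := trib_pos_s8 (n := n+1+1) (by omega)
      omega

lemma trib2 : trib 2 = 1 := rfl
lemma trib3 : trib 3 = 1 := rfl
lemma trib4 : trib 4 = 2 := rfl
lemma trib5 : trib 5 = 4 := rfl

lemma isTribRep_subset {S T : Finset ℕ} (h : IsTribRep S) (hTS : T ⊆ S) : IsTribRep T :=
  ⟨fun i hi => h.1 i (hTS hi), fun i hi => h.2 i ⟨hTS hi.1, hTS hi.2.1, hTS hi.2.2⟩⟩

lemma trib_le_sum {S : Finset ℕ} {i : ℕ} (hi : i ∈ S) : trib i ≤ ∑ j ∈ S, trib j :=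
  Finset.single_le_sum (fun _ _ => Nat.zero_le _) hi

lemma one_le_sum {S : Finset ℕ} (hS : IsTribRep S) (h : S.Nonempty) :
    1 ≤ ∑ j ∈ S, trib j := by
  obtain ⟨i, hi⟩ := h
  exact le_trans (trib_pos_s8 (by have := hS.1 i hi; omega)) (trib_le_sum hi)

lemma sum_lt_trib {n : ℕ} (hn : 1 ≤ n) :
    ∀ S : Finset ℕ, IsTribRep S → (∀ i ∈ S, i ≤ n) → ∑ i ∈ S, trib i < trib (n+1) := by
  induction n using Nat.strong_induction_on with
  | _ n ih =>
    intro S hS hle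
    by_cases hn2 : n ≤ 2
    · have : S = ∅ := by
        rw [Finset.eq_empty_iff_forall_notMem]
        intro i hi; have := hS.1 i hi; have := hle i hi; omega
      subst this
      simpa using trib_pos_s8 (n := n+1) (by omega)
    push_neg at hn2
    by_cases hnS : n ∈ S
    · by_cases hn1 : n - 1 ∈ S
      · -- then n-2 ∉ S
        have hn4 : 4 ≤ n := by
          rcases Nat.lt_or_ge n 4 with h | h
          · exfalso; have := hS.1 (n-1) hn1; omega
          · exact h
        have hn2S : n - 2 ∉ S := by
          intro hc
          exact hS.2 (n-2) ⟨hc, by rwa [show n-2+1 = n-1 from by omega],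
            by rwa [show n-2+2 = n from by omega]⟩
        set T := (S.erase n).erase (n-1) with hT
        have hTsub : T ⊆ S := (Finset.erase_subset _ _).trans (Finset.erase_subset _ _)
        have hTle : ∀ i ∈ T, i ≤ n - 3 := by
          intro i hi
          have h1 : i ≠ n - 1 := Finset.ne_of_mem_erase hi
          have h2 : i ≠ n := Finset.ne_of_mem_erase (Finset.mem_of_mem_erase hi)
          have h3 : i ≠ n - 2 := fun h => hn2S (h ▸ hTsub hi)
          have := hle i (hTsub hi); omega
        have hTlt := ih (n-3) (by omega) (by omega) T (isTribRep_subset hS hTsub) hTle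
        have e2 : trib n + (trib (n-1) + ∑ i ∈ T, trib i) = ∑ i ∈ S, trib i := by
          rw [hT]
          rw [Finset.add_sum_erase _ _ (Finset.mem_erase.mpr ⟨by omega, hn1⟩)]
          exact Finset.add_sum_erase _ _ hnS
        have hrec : trib (n+1) = trib n + trib (n-1) + trib (n-2) := trib_rec (by omega)
        have : trib (n-3+1) = trib (n-2) := by rw [show n-3+1 = n-2 from by omega]
        omega
      · set T := S.erase n with hT
        have hTsub : T ⊆ S := Finset.erase_subset _ _
        have hTle : ∀ i ∈ T, i ≤ n - 2 := by
          intro i hi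
          have h2 : i ≠ n := Finset.ne_of_mem_erase hi
          have h1 : i ≠ n - 1 := fun h => hn1 (h ▸ hTsub hi)
          have := hle i (hTsub hi); omega
        have hTlt := ih (n-2) (by omega) (by omega) T (isTribRep_subset hS hTsub) hTle
        have e2 : trib n + ∑ i ∈ T, trib i = ∑ i ∈ S, trib i :=
          Finset.add_sum_erase _ _ hnS
        have hrec : trib (n+1) = trib n + trib (n-1) + trib (n-2) := trib_rec (by omega)
        have : trib (n-2+1) = trib (n-1) := by rw [show n-2+1 = n-1 from by omega]
        omega
    · have hle' : ∀ i ∈ S, i ≤ n - 1 := by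
        intro i hi; have := hle i hi; have : i ≠ n := fun h => hnS (h ▸ hi); omega
      have := ih (n-1) (by omega) (by omega) S hS hle'
      have h1 : trib (n-1+1) = trib n := by rw [show n-1+1 = n from by omega]
      have h2 : trib n ≤ trib (n+1) := trib_mono (by omega)
      omega

lemma max_eq_of_sum_eq {S S' : Finset ℕ} (hS : IsTribRep S) (hS' : IsTribRep S')
    (hne : S.Nonempty) (hne' : S'.Nonempty)
    (h : ∑ i ∈ S, trib i = ∑ i ∈ S', trib i) : S.max' hne = S'.max' hne' := by
  by_contra hc
  wlog hlt : S.max' hne < S'.max' hne' generalizing S S'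
  · exact this hS' hS hne' hne h.symm (fun h => hc h.symm) (by omega)
  have h1 : ∑ i ∈ S, trib i < trib (S.max' hne + 1) :=
    sum_lt_trib (by have := hS.1 _ (S.max'_mem hne); omega) S hS
      (fun i hi => S.le_max' i hi)
  have h2 : trib (S'.max' hne') ≤ ∑ i ∈ S', trib i := trib_le_sum (S'.max'_mem hne')
  have h3 : trib (S.max' hne + 1) ≤ trib (S'.max' hne') := trib_mono (by omega)
  omega

lemma rep_unique : ∀ S S' : Finset ℕ, IsTribRep S → IsTribRep S' →
    ∑ i ∈ S, trib i = ∑ i ∈ S', trib i → S = S' := by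
  intro S
  induction S using Finset.strongInduction with
  | _ S ih =>
    intro S' hS hS' h
    rcases Finset.eq_empty_or_nonempty S with rfl | hne
    · rcases Finset.eq_empty_or_nonempty S' with rfl | hne'
      · rfl
      · exfalso; have := one_le_sum hS' hne'; rw [Finset.sum_empty] at h; omega
    rcases Finset.eq_empty_or_nonempty S' with rfl | hne'
    · exfalso; have := one_le_sum hS hne; rw [Finset.sum_empty] at h; omega
    have hmax := max_eq_of_sum_eq hS hS' hne hne' h
    set k := S.max' hne with hk
    have hkS : k ∈ S := S.max'_mem hne
    have hkS' : k ∈ S' := hmax ▸ S'.max'_mem hne'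
    have hsub : S.erase k ⊂ S := Finset.erase_ssubset hkS
    have hsum : ∑ i ∈ S.erase k, trib i = ∑ i ∈ S'.erase k, trib i := by
      have e1 := Finset.add_sum_erase _ trib hkS
      have e2 := Finset.add_sum_erase _ trib hkS'
      omega
    have := ih (S.erase k) hsub (S'.erase k)
      (isTribRep_subset hS (Finset.erase_subset _ _))
      (isTribRep_subset hS' (Finset.erase_subset _ _)) hsum
    have : insert k (S.erase k) = insert k (S'.erase k) := by rw [this]
    rwa [Finset.insert_erase hkS, Finset.insert_erase hkS'] at this

lemma rep_exists : ∀ m : ℕ, 1 ≤ m → ∃ S : Finset ℕ, IsTribRep S ∧ ∑ i ∈ S, trib i = m := by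
  intro m
  induction m using Nat.strong_induction_on with
  | _ m ih =>
    intro hm
    -- find greedy k
    set K := (Finset.Icc 3 (m+2)).filter (fun k => trib k ≤ m) with hK
    have hKne : K.Nonempty := ⟨3, by
      simp [hK, Finset.mem_filter, Finset.mem_Icc]
      constructor
      · omega
      · show trib 3 ≤ m
        have : trib 3 = 1 := trib3
        omega⟩
    set k := K.max' hKne with hk
    have hkK : k ∈ K := K.max'_mem hKne
    have hk3 : 3 ≤ k := by have := (Finset.mem_filter.mp hkK).1; simp [Finset.mem_Icc] at this; omega
    have hkle : trib k ≤ m := (Finset.mem_filter.mp hkK).2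
    have hklt : m < trib (k+1) := by
      by_contra hc
      push_neg at hc
      by_cases hb : k + 1 ≤ m + 2
      · have : k + 1 ∈ K := by
          simp [hK, Finset.mem_filter, Finset.mem_Icc]
          exact ⟨⟨by omega, by omega⟩, hc⟩
        have := K.le_max' _ this
        omega
      · -- k ≥ m + 2, so trib (k+1) ≥ trib (m+3) > m
        have h1 : m + 1 ≤ trib (m + 3) := le_trib_add_two (m+1)
        have h2 : trib (m+3) ≤ trib (k+1) := trib_mono (by omega)
        omega
    set m' := m - trib k with hm'
    by_cases hm0 : m' = 0
    · refine ⟨{k}, ⟨?_, ?_⟩, ?_⟩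
      · intro i hi; simp at hi; omega
      · intro i hi; simp at hi; omega
      · simp; omega
    · have hm'lt : m' < m := by have := trib_pos_s8 (n := k) (by omega); omega
      obtain ⟨R, hR, hRsum⟩ := ih m' hm'lt (by omega)
      have hrec : trib (k+1) = trib k + trib (k-1) + trib (k-2) := trib_rec (by omega)
      have hreck : trib k = trib (k-1) + trib (k-2) + trib (k-3) := by
        have := trib_rec (n := k - 1) (by omega)
        rw [show k-1+1 = k from by omega, show k-1-1 = k-2 from by omega,
          show k-1-2 = k-3 from by omega] at this
        exact this
      have hm'small : m' < trib (k-1) + trib (k-2) := by omega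
      have hRlt : ∀ j ∈ R, j < k := by
        intro j hj
        by_contra hc
        push_neg at hc
        have h1 : trib j ≤ m' := hRsum ▸ trib_le_sum hj
        have h2 : trib k ≤ trib j := trib_mono hc
        omega
      have hnotboth : ¬ (k - 1 ∈ R ∧ k - 2 ∈ R) := by
        rintro ⟨h1, h2⟩
        have e1 : trib (k-1) + ∑ i ∈ R.erase (k-1), trib i = ∑ i ∈ R, trib i :=
          Finset.add_sum_erase _ _ h1
        have e2 : trib (k-2) ≤ ∑ i ∈ R.erase (k-1), trib i :=
          trib_le_sum (Finset.mem_erase.mpr ⟨by omega, h2⟩)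
        omega
      have hkR : k ∉ R := fun h => absurd (hRlt k h) (by omega)
      refine ⟨insert k R, ⟨?_, ?_⟩, ?_⟩
      · intro i hi
        rcases Finset.mem_insert.mp hi with rfl | hi
        · omega
        · exact hR.1 i hi
      · rintro i ⟨hi1, hi2, hi3⟩
        rcases Finset.mem_insert.mp hi3 with h3 | h3
        · -- i + 2 = k, so i = k-2, i+1 = k-1 in R
          rcases Finset.mem_insert.mp hi1 with h1 | h1
          · omega
          rcases Finset.mem_insert.mp hi2 with h2 | h2
          · omega
          exact hnotboth ⟨by rwa [show k-1 = i+1 from by omega], by rwa [show k-2 = i from by omega]⟩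
        · have hi3' := hRlt _ h3
          rcases Finset.mem_insert.mp hi1 with h1 | h1
          · omega
          rcases Finset.mem_insert.mp hi2 with h2 | h2
          · omega
          exact hR.2 i ⟨h1, h2, h3⟩
      · rw [Finset.sum_insert hkR, hRsum]; omega

/-- sum bound when n and n-1 not both in S -/
lemma sum_lt_trib_pair {n : ℕ} (hn : 2 ≤ n) (S : Finset ℕ) (hS : IsTribRep S)
    (hle : ∀ i ∈ S, i ≤ n) (hpair : ¬ (n ∈ S ∧ n - 1 ∈ S)) :
    ∑ i ∈ S, trib i < trib n + trib (n-1) := by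
  by_cases hnS : n ∈ S
  · have hn1 : n - 1 ∉ S := fun h => hpair ⟨hnS, h⟩
    have hn3 : 3 ≤ n := by have := hS.1 n hnS; omega
    have hTle : ∀ i ∈ S.erase n, i ≤ n - 2 := by
      intro i hi
      have h2 : i ≠ n := Finset.ne_of_mem_erase hi
      have h1 : i ≠ n - 1 := fun h => hn1 (h ▸ Finset.mem_of_mem_erase hi)
      have := hle i (Finset.mem_of_mem_erase hi); omega
    have hlt := sum_lt_trib (n := n - 2) (by omega) (S.erase n)
      (isTribRep_subset hS (Finset.erase_subset _ _)) hTle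
    have e : trib n + ∑ i ∈ S.erase n, trib i = ∑ i ∈ S, trib i :=
      Finset.add_sum_erase _ _ hnS
    have : trib (n-2+1) = trib (n-1) := by rw [show n-2+1 = n-1 from by omega]
    omega
  · have hle' : ∀ i ∈ S, i ≤ n - 1 := by
      intro i hi; have := hle i hi; have : i ≠ n := fun h => hnS (h ▸ hi); omega
    have := sum_lt_trib (n := n - 1) (by omega) S hS hle'
    have h1 : trib (n-1+1) = trib n := by rw [show n-1+1 = n from by omega]
    have h2 : 0 < trib n := trib_pos_s8 (by omega)
    omega

def P (m : ℕ) : Prop := ∃ S' : Finset ℕ, IsTribRep S' ∧ 3 ∈ S' ∧ m = ∑ i ∈ S', trib i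

noncomputable instance : DecidablePred P := fun _ => Classical.propDecidable _

noncomputable def F (n : ℕ) : ℕ := ((Finset.Icc 1 n).filter P).card

lemma P_one : P 1 := by
  refine ⟨{3}, ⟨?_, ?_⟩, by simp, by simp [trib3]⟩
  · intro i hi; simp at hi; omega
  · intro i hi; simp at hi; omega

lemma not_P_of_rep {S : Finset ℕ} (hS : IsTribRep S) (h3 : 3 ∉ S) :
    ¬ P (∑ i ∈ S, trib i) := by
  rintro ⟨S', hS', h3', hsum⟩
  exact h3 ((rep_unique S S' hS hS' hsum) ▸ h3')

lemma not_P_two : ¬ P 2 := by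
  have : ¬ P (∑ i ∈ ({4} : Finset ℕ), trib i) := by
    apply not_P_of_rep
    · exact ⟨fun i hi => by simp at hi; omega, fun i hi => by simp at hi; omega⟩
    · simp
  simpa [trib4] using this

lemma not_P_trib {k : ℕ} (hk : 4 ≤ k) : ¬ P (trib k) := by
  have : ¬ P (∑ i ∈ ({k} : Finset ℕ), trib i) := by
    apply not_P_of_rep
    · exact ⟨fun i hi => by simp at hi; omega, fun i hi => by simp at hi; omega⟩
    · simp; omega
  simpa using this

lemma P_shift {k m : ℕ} (hk : 4 ≤ k) (h1 : 1 ≤ m)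
    (h2 : m < trib (k-1) + trib (k-2)) : P (trib k + m) ↔ P m := by
  have hrec : trib (k+1) = trib k + trib (k-1) + trib (k-2) := trib_rec (by omega)
  have hreck : trib k = trib (k-1) + trib (k-2) + trib (k-3) := by
    have := trib_rec (n := k - 1) (by omega)
    rw [show k-1+1 = k from by omega, show k-1-1 = k-2 from by omega,
      show k-1-2 = k-3 from by omega] at this
    exact this
  constructor
  · rintro ⟨S', hS', h3', hsum⟩
    have hne : S'.Nonempty := ⟨3, h3'⟩
    set K := S'.max' hne with hK
    have hKmem : K ∈ S' := S'.max'_mem hne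
    have hK3 : 3 ≤ K := by have := hS'.1 K hKmem; omega
    have hub : ∑ i ∈ S', trib i < trib (K+1) :=
      sum_lt_trib (by omega) S' hS' (fun i hi => S'.le_max' i hi)
    have hlb : trib K ≤ ∑ i ∈ S', trib i := trib_le_sum hKmem
    have hKk : K = k := by
      by_contra hc
      rcases Nat.lt_or_ge K k with h | h
      · -- trib K ≤ sum; sum = trib k + m > trib k ≥ ... but upper: sum < trib(K+1) ≤ trib k
        have : trib (K+1) ≤ trib k := trib_mono (by omega)
        omega
      · have : trib (k+1) ≤ trib K := trib_mono (by omega)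
        omega
    refine ⟨S'.erase k, isTribRep_subset hS' (Finset.erase_subset _ _),
      Finset.mem_erase.mpr ⟨by omega, h3'⟩, ?_⟩
    have e : trib k + ∑ i ∈ S'.erase k, trib i = ∑ i ∈ S', trib i :=
      Finset.add_sum_erase _ _ (hKk ▸ hKmem)
    omega
  · rintro ⟨R, hR, h3R, hsum⟩
    have hRlt : ∀ j ∈ R, j < k := by
      intro j hj
      by_contra hc
      push_neg at hc
      have ht : trib j ≤ m := hsum ▸ trib_le_sum hj
      have : trib k ≤ trib j := trib_mono hc
      omega
    have hnotboth : ¬ (k - 1 ∈ R ∧ k - 2 ∈ R) := by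
      rintro ⟨ha, hb⟩
      have e1 : trib (k-1) + ∑ i ∈ R.erase (k-1), trib i = ∑ i ∈ R, trib i :=
        Finset.add_sum_erase _ _ ha
      have e2 : trib (k-2) ≤ ∑ i ∈ R.erase (k-1), trib i :=
        trib_le_sum (Finset.mem_erase.mpr ⟨by omega, hb⟩)
      omega
    have hkR : k ∉ R := fun h => absurd (hRlt k h) (by omega)
    refine ⟨insert k R, ⟨?_, ?_⟩, Finset.mem_insert.mpr (Or.inr h3R), ?_⟩
    · intro i hi
      rcases Finset.mem_insert.mp hi with rfl | hi
      · omega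
      · exact hR.1 i hi
    · rintro i ⟨hi1, hi2, hi3⟩
      rcases Finset.mem_insert.mp hi3 with h3 | h3
      · rcases Finset.mem_insert.mp hi1 with hh1 | hh1
        · omega
        rcases Finset.mem_insert.mp hi2 with hh2 | hh2
        · omega
        exact hnotboth ⟨by rwa [show k-1 = i+1 from by omega], by rwa [show k-2 = i from by omega]⟩
      · have hi3' := hRlt _ h3
        rcases Finset.mem_insert.mp hi1 with hh1 | hh1
        · omega
        rcases Finset.mem_insert.mp hi2 with hh2 | hh2
        · omega
        exact hR.2 i ⟨hh1, hh2, h3⟩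
    · rw [Finset.sum_insert hkR]; omega

lemma F_split {k g₀ : ℕ} (hk : 4 ≤ k) (hg : g₀ < trib (k-1) + trib (k-2)) :
    F (trib k + g₀) = F (trib k - 1) + F g₀ := by
  have htk : 1 ≤ trib k := trib_pos_s8 (by omega)
  have hsplit : Finset.Icc 1 (trib k + g₀) =
      Finset.Icc 1 (trib k - 1) ∪ Finset.Icc (trib k) (trib k + g₀) := by
    ext x; simp [Finset.mem_Icc, Finset.mem_union]; omega
  have hdisj : Disjoint (Finset.Icc 1 (trib k - 1)) (Finset.Icc (trib k) (trib k + g₀)) := by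
    rw [Finset.disjoint_left]
    intro x hx hx'
    simp [Finset.mem_Icc] at hx hx'
    omega
  rw [F, hsplit, Finset.filter_union, Finset.card_union_of_disjoint
    (Finset.disjoint_filter_filter hdisj)]
  congr 1
  -- card of filter P on [trib k, trib k + g₀] = F g₀
  rw [F]
  apply Finset.card_bij' (fun m _ => m - trib k) (fun m _ => m + trib k)
  · intro m hm
    simp only [Finset.mem_filter, Finset.mem_Icc] at hm ⊢
    obtain ⟨⟨hm1, hm2⟩, hmP⟩ := hm
    have hmne : m ≠ trib k := by
      rintro rfl
      exact not_P_trib hk hmP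
    have h1m : 1 ≤ m - trib k := by omega
    refine ⟨⟨h1m, by omega⟩, ?_⟩
    rw [← P_shift hk h1m (by omega)]
    rwa [show trib k + (m - trib k) = m from by omega]
  · intro m hm
    simp only [Finset.mem_filter, Finset.mem_Icc] at hm ⊢
    obtain ⟨⟨hm1, hm2⟩, hmP⟩ := hm
    refine ⟨⟨by omega, by omega⟩, ?_⟩
    rw [add_comm, P_shift hk hm1 (by omega)]
    exact hmP
  · intro m hm
    simp only [Finset.mem_filter, Finset.mem_Icc] at hm
    omega
  · intro m hm
    omega


lemma F_zero : F 0 = 0 := by simp [F]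

lemma F_one : F 1 = 1 := by
  rw [F, show Finset.Icc 1 1 = {1} from rfl, Finset.filter_singleton, if_pos P_one]
  rfl

lemma P_three : P 3 := by
  refine ⟨{3, 4}, ⟨?_, ?_⟩, by simp, ?_⟩
  · intro i hi; simp at hi; omega
  · intro i hi
    simp at hi
    omega
  · rw [Finset.sum_insert (by simp), Finset.sum_singleton, trib3, trib4]

lemma F_three : F 3 = 2 := by
  have : (Finset.Icc 1 3).filter P = {1, 3} := by
    ext x
    simp only [Finset.mem_filter, Finset.mem_Icc, Finset.mem_insert, Finset.mem_singleton]
    constructor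
    · rintro ⟨⟨h1, h2⟩, hP⟩
      interval_cases x
      · exact Or.inl rfl
      · exact absurd hP not_P_two
      · exact Or.inr rfl
    · rintro (rfl | rfl)
      · exact ⟨⟨le_refl _, by omega⟩, P_one⟩
      · exact ⟨⟨by omega, le_refl _⟩, P_three⟩
  rw [F, this]
  rfl

lemma F_trib : ∀ k : ℕ, 3 ≤ k → F (trib k - 1) + trib (k-1) = trib k := by
  intro k
  induction k using Nat.strong_induction_on with
  | _ k ih =>
    intro hk3
    match k, hk3 with
    | 3, _ => rw [trib3, show (3:ℕ)-1 = 2 from rfl, trib2]; simp [F_zero]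
    | 4, _ => rw [trib4, show (4:ℕ)-1 = 3 from rfl, trib3, F_one]
    | 5, _ => rw [trib5, show (5:ℕ)-1 = 4 from rfl, trib4, F_three]
    | (j+6), _ => ?_
    set j' := j + 5 with hj'
    show F (trib (j' + 1) - 1) + trib (j' + 1 - 1) = trib (j' + 1)
    have hrec : trib (j'+1) = trib j' + trib (j'-1) + trib (j'-2) := trib_rec (by omega)
    have h1 : 1 ≤ trib (j'-1) := trib_pos_s8 (by omega)
    have h2 : 1 ≤ trib (j'-2) := trib_pos_s8 (by omega)
    have h3 : 1 ≤ trib (j'-3) := trib_pos_s8 (by omega)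
    have split1 : F (trib (j'+1) - 1) = F (trib j' - 1) + F (trib (j'-1) + trib (j'-2) - 1) := by
      rw [show trib (j'+1) - 1 = trib j' + (trib (j'-1) + trib (j'-2) - 1) from by omega]
      exact F_split (by omega) (by omega)
    have split2 : F (trib (j'-1) + trib (j'-2) - 1) = F (trib (j'-1) - 1) + F (trib (j'-2) - 1) := by
      rw [show trib (j'-1) + trib (j'-2) - 1 = trib (j'-1) + (trib (j'-2) - 1) from by omega]
      have hr : trib (j'-2) ≤ trib (j'-1-1) + trib (j'-1-2) := by
        have := trib_rec (n := j'-3) (by omega)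
        rw [show j'-3+1 = j'-2 from by omega] at this
        rw [show j'-1-1 = j'-2 from by omega, show j'-1-2 = j'-3 from by omega]
        have : trib (j'-2) = trib (j'-3) + trib (j'-3-1) + trib (j'-3-2) := this
        omega
      exact F_split (by omega) (by omega)
    have d1 := ih j' (by omega) (by omega)
    have d2 := ih (j'-1) (by omega) (by omega)
    have d3 := ih (j'-2) (by omega) (by omega)
    have e1 : j' - 1 - 1 = j' - 2 := by omega
    have e2 : j' - 2 - 1 = j' - 3 := by omega
    have hreck : trib j' = trib (j'-1) + trib (j'-2) + trib (j'-3) := by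
      have := trib_rec (n := j'-1) (by omega)
      rw [show j'-1+1 = j' from by omega, show j'-1-1 = j'-2 from by omega,
        show j'-1-2 = j'-3 from by omega] at this
      exact this
    rw [show j'+1-1 = j' from by omega]
    rw [e1] at d2
    rw [e2] at d3
    omega

lemma main_count : ∀ S : Finset ℕ, IsTribRep S → 3 ∈ S →
    F (∑ i ∈ S, trib i) + ∑ i ∈ S.filter (fun i => 4 ≤ i), trib (i-1) = ∑ i ∈ S, trib i := by
  intro S
  induction S using Finset.strongInduction with
  | _ S ih =>
    intro hS h3
    have hne : S.Nonempty := ⟨3, h3⟩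
    set k := S.max' hne with hk
    have hkS : k ∈ S := S.max'_mem hne
    have hk3 : 3 ≤ k := by have := hS.1 k hkS; omega
    by_cases hk4 : k ≤ 3
    · -- S = {3}
      have hSeq : S = {3} := by
        apply Finset.eq_singleton_iff_unique_mem.mpr
        exact ⟨h3, fun x hx => by have := hS.1 x hx; have := S.le_max' x hx; omega⟩
      subst hSeq
      rw [Finset.sum_singleton, trib3]
      rw [show ({3} : Finset ℕ).filter (fun i => 4 ≤ i) = ∅ from by
        rw [Finset.filter_singleton, if_neg (by omega)]]
      simp [F_one]
    · push_neg at hk4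
      set S₀ := S.erase k with hS₀
      have hsub : S₀ ⊂ S := Finset.erase_ssubset hkS
      have h3S₀ : 3 ∈ S₀ := Finset.mem_erase.mpr ⟨by omega, h3⟩
      have hS₀rep : IsTribRep S₀ := isTribRep_subset hS (Finset.erase_subset _ _)
      have hsum : trib k + ∑ i ∈ S₀, trib i = ∑ i ∈ S, trib i :=
        Finset.add_sum_erase _ _ hkS
      set g₀ := ∑ i ∈ S₀, trib i with hg₀
      have hg₀lt : g₀ < trib (k-1) + trib (k-2) := by
        have hb : ¬ ((k-1) ∈ S₀ ∧ (k-1) - 1 ∈ S₀) := by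
          rintro ⟨ha, hb⟩
          refine hS.2 (k-2) ⟨?_, ?_, ?_⟩
          · rw [show k-2 = k-1-1 from by omega]; exact Finset.mem_of_mem_erase hb
          · rw [show k-2+1 = k-1 from by omega]; exact Finset.mem_of_mem_erase ha
          · rwa [show k-2+2 = k from by omega]
        have := sum_lt_trib_pair (n := k-1) (by omega) S₀ hS₀rep
          (fun i hi => by
            have := S.le_max' i (Finset.mem_of_mem_erase hi)
            have : i ≠ k := Finset.ne_of_mem_erase hi
            omega) hb
        rw [show k-1-1 = k-2 from by omega] at this
        exact this
      have hsplit : F (∑ i ∈ S, trib i) = F (trib k - 1) + F g₀ := by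
        rw [← hsum]
        exact F_split (by omega) hg₀lt
      have hD := F_trib k (by omega)
      have hIH := ih S₀ hsub hS₀rep h3S₀
      rw [← hg₀] at hIH
      -- filter decomposition
      have hfe : S.filter (fun i => 4 ≤ i) = insert k (S₀.filter (fun i => 4 ≤ i)) := by
        ext x
        simp only [Finset.mem_filter, Finset.mem_insert, hS₀, Finset.mem_erase]
        constructor
        · rintro ⟨hx, hx4⟩
          by_cases hxk : x = k
          · exact Or.inl hxk
          · exact Or.inr ⟨⟨hxk, hx⟩, hx4⟩
        · rintro (rfl | ⟨⟨hxk, hx⟩, hx4⟩)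
          · exact ⟨hkS, by omega⟩
          · exact ⟨hx, hx4⟩
      have hknot : k ∉ S₀.filter (fun i => 4 ≤ i) := by
        simp [hS₀, Finset.mem_filter]
      have hfsum : ∑ i ∈ S.filter (fun i => 4 ≤ i), trib (i-1) =
          trib (k-1) + ∑ i ∈ S₀.filter (fun i => 4 ≤ i), trib (i-1) := by
        rw [hfe, Finset.sum_insert hknot]
      omega

/-- If `S` is a Tribonacci representation set containing 3 and `g = ∑_{i∈S} T(i)`,
    then the number of positive integers `m ≤ g` whose Tribonacci representation
    contains 3 equals `g − ∑_{i∈S, i≥4} T(i−1)`. -/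
theorem row_number_formula (S : Finset ℕ) (hS : IsTribRep S) (h3 : 3 ∈ S) :
    (Set.ncard {m : ℕ | 1 ≤ m ∧ m ≤ ∑ i ∈ S, trib i ∧
        ∃ S' : Finset ℕ, IsTribRep S' ∧ 3 ∈ S' ∧ m = ∑ i ∈ S', trib i} : ℤ) =
      (↑(∑ i ∈ S, trib i) : ℤ) -
        ∑ i ∈ S.filter (fun i => 4 ≤ i), (trib (i - 1) : ℤ) := by
  have hset : {m : ℕ | 1 ≤ m ∧ m ≤ ∑ i ∈ S, trib i ∧
      ∃ S' : Finset ℕ, IsTribRep S' ∧ 3 ∈ S' ∧ m = ∑ i ∈ S', trib i} =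
      ↑((Finset.Icc 1 (∑ i ∈ S, trib i)).filter P) := by
    ext m
    simp only [Set.mem_setOf_eq, Finset.coe_filter, Finset.mem_Icc, P]
    tauto
  have hcard : Set.ncard {m : ℕ | 1 ≤ m ∧ m ≤ ∑ i ∈ S, trib i ∧
      ∃ S' : Finset ℕ, IsTribRep S' ∧ 3 ∈ S' ∧ m = ∑ i ∈ S', trib i} =
      F (∑ i ∈ S, trib i) := by
    rw [hset, Set.ncard_coe_finset]; rfl
  rw [hcard]
  have hm := main_count S hS h3
  have hsum2 : (∑ i ∈ S.filter (fun i => 4 ≤ i), (trib (i - 1) : ℤ)) =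
      ((∑ i ∈ S.filter (fun i => 4 ≤ i), trib (i - 1) : ℕ) : ℤ) := by
    push_cast
    rfl
  rw [hsum2]
  omega
end
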